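/- Let n, b, d be positive integers with b ≤ n/2, and let p : ℝ^d → (0,∞) be an L-log-Lipschitz probability density, i.e., p is differentiable with ‖∇ log p(w)‖ ≤ L for all w ∈ ℝ^d. Let β ∈ [0, 1/L]. Let G be the collection of all subsets of {1,…,n} of size b, G_n = {B ∈ G : n ∈ B}, and let {μ_B : B ∈ G} and {μ'_B : B ∈ G} be points of ℝ^d such that (i) ‖μ_B − μ'_B‖ ≤ β for all B ∈ G_n and μ_B = μ'_B for all B ∈ G \ G_n, and (ii) the diameter of {μ_B : B ∈ G} ∪ {μ'_B : B ∈ G} is at most 1. For μ ∈ ℝ^d let p_μ denote the probability measure on ℝ^d with density w ↦ p(w − μ), and let P = (1/|G|)Σ_{B∈G} p_{μ_B} and P' = (1/|G|)Σ_{B∈G} p_{μ'_B}. Then D_KL(P, P') ≤ 2·(ln 2)·L²·e^L · b²β²/n². -/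

import Mathlib

open MeasureTheory ProbabilityTheory Real
open scoped ENNReal

/-- Kullback–Leibler divergence `D_KL(P,Q) = ∫ log(dP/dQ) dP`, set to `+∞` when
`P` is not absolutely continuous with respect to `Q`. -/
noncomputable def klDiv {α : Type*} [MeasurableSpace α] (P Q : Measure α) : ℝ≥0∞ :=
  @ite _ (P ≪ Q) (Classical.dec _) (ENNReal.ofReal (∫ x, llr P Q x ∂P)) ⊤

/-- The collection `G` of all mini-batches: subsets of `{1,…,n}` of size `b`. -/
def batches (n b : ℕ) : Finset (Finset (Fin n)) :=
  Finset.powersetCard b (Finset.univ : Finset (Fin n))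

/-- The shift of the probability measure with density `p` by the vector `μ`:
the measure on `ℝ^d` with density `w ↦ p(w − μ)`. -/
noncomputable def shiftedNoise {d : ℕ} (p : EuclideanSpace ℝ (Fin d) → ℝ)
    (μ : EuclideanSpace ℝ (Fin d)) : Measure (EuclideanSpace ℝ (Fin d)) :=
  MeasureTheory.volume.withDensity fun w => ENNReal.ofReal (p (w - μ))

open scoped NNReal

lemma aux_exp_quad {x : ℝ} (h0 : 0 ≤ x) (h1 : x ≤ 1) :
    exp x + exp (-x) - 2 ≤ 2 * Real.log 2 * x ^ 2 := by
  have hx : |x| ≤ 1 := by rwa [abs_of_nonneg h0]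
  have hx' : |(-x)| ≤ 1 := by rwa [abs_neg, abs_of_nonneg h0]
  have e1 := Real.exp_bound hx (by norm_num : 0 < 4)
  have e2 := Real.exp_bound hx' (by norm_num : 0 < 4)
  rw [abs_of_nonneg h0] at e1
  rw [abs_neg, abs_of_nonneg h0] at e2
  simp only [Finset.sum_range_succ, Finset.sum_range_zero] at e1 e2
  norm_num [Nat.factorial] at e1 e2
  have hb1 := abs_le.1 e1
  have hb2 := abs_le.1 e2
  have hx2 : x ^ 2 ≤ 1 := by nlinarith
  have hx4 : x ^ 4 ≤ x ^ 2 := by nlinarith [sq_nonneg x]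
  have hlog : (0.6931471803 : ℝ) < Real.log 2 := Real.log_two_gt_d9
  nlinarith [hb1.2, hb2.2, sq_nonneg x]

lemma aux_core {a u v K c x : ℝ} (ha : 0 < a) (hu : 0 ≤ u) (hv : 0 ≤ v)
    (hK : 0 ≤ K) (hc : 0 < c) (hx1 : u ≤ exp x * v) (hx2 : v ≤ exp x * u)
    (hvK : v * c ≤ K * (a + v)) :
    (a + u) * Real.log ((a + u) / (a + v)) + ((a + v) - (a + u)) ≤
      (exp x + exp (-x) - 2) * (K / c) * u := by
  have hf : 0 < a + u := by linarith
  have hg : 0 < a + v := by linarith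
  have he : exp (-x) * exp x = 1 := by rw [← Real.exp_add]; simp
  have hs := Real.exp_pos x
  have ht := Real.exp_pos (-x)
  have hC : 0 ≤ exp x + exp (-x) - 2 := by nlinarith [sq_nonneg (exp x - 1)]
  have hlog : Real.log ((a + u) / (a + v)) ≤ (a + u) / (a + v) - 1 :=
    Real.log_le_sub_one_of_pos (by positivity)
  have h1 : (a + u) * Real.log ((a + u) / (a + v)) ≤ (a + u) * ((a + u) / (a + v) - 1) :=
    mul_le_mul_of_nonneg_left hlog hf.le
  have h2 : (a + u) * ((a + u) / (a + v) - 1) + ((a + v) - (a + u)) = (u - v) ^ 2 / (a + v) := by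
    field_simp
    ring
  have hquad : (u - v) ^ 2 ≤ (exp x + exp (-x) - 2) * (u * v) := by
    have hprod : 0 ≤ (exp x * v - u) * (exp x * u - v) :=
      mul_nonneg (by linarith) (by linarith)
    have h5 : exp (-x) * ((exp x * v - u) * (exp x * u - v)) =
        (exp x + exp (-x)) * (u * v) - u ^ 2 - v ^ 2 := by
      linear_combination (exp x * (u * v) - u ^ 2 - v ^ 2) * he
    nlinarith [mul_nonneg ht.le hprod, h5]
  have h3 : (u - v) ^ 2 / (a + v) ≤ ((exp x + exp (-x) - 2) * u) * (v / (a + v)) := by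
    rw [div_le_iff₀ hg]
    calc (u - v) ^ 2 ≤ (exp x + exp (-x) - 2) * (u * v) := hquad
    _ = ((exp x + exp (-x) - 2) * u) * (v / (a + v)) * (a + v) := by
        field_simp
  have h4 : v / (a + v) ≤ K / c := by
    rw [div_le_div_iff₀ hg hc]; linarith
  calc (a + u) * Real.log ((a + u) / (a + v)) + ((a + v) - (a + u))
      ≤ (a + u) * ((a + u) / (a + v) - 1) + ((a + v) - (a + u)) := by linarith
    _ = (u - v) ^ 2 / (a + v) := h2
    _ ≤ ((exp x + exp (-x) - 2) * u) * (v / (a + v)) := h3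
    _ ≤ ((exp x + exp (-x) - 2) * u) * (K / c) := by
        apply mul_le_mul_of_nonneg_left h4 (mul_nonneg hC hu)
    _ = (exp x + exp (-x) - 2) * (K / c) * u := by ring

lemma aux_withDensity_finsetSum {α ι : Type*} [MeasurableSpace α] (μ : Measure α)
    (s : Finset ι) (f : ι → α → ENNReal) (hf : ∀ i, Measurable (f i)) :
    μ.withDensity (fun a => ∑ i ∈ s, f i a) = ∑ i ∈ s, μ.withDensity (f i) := by
  classical
  induction s using Finset.induction_on with
  | empty => simp
  | insert j t hni ih =>
    rw [Finset.sum_insert hni]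
    have : (fun a => ∑ i ∈ insert j t, f i a) = (fun a => f j a + ∑ i ∈ t, f i a) := by
      funext a; rw [Finset.sum_insert hni]
    rw [this]
    rw [show (fun a => f j a + ∑ i ∈ t, f i a) = f j + (fun a => ∑ i ∈ t, f i a) from rfl]
    rw [withDensity_add_left (hf j), ih]

lemma aux_card_filter_mem {m : ℕ} (a : Fin m) (k : ℕ) :
    ((Finset.powersetCard (k + 1) (Finset.univ : Finset (Fin m))).filter
      (fun B => a ∈ B)).card = Nat.choose (m - 1) k := by
  classical
  have hcard : ((Finset.univ : Finset (Fin m)).erase a).card = m - 1 := by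
    rw [Finset.card_erase_of_mem (Finset.mem_univ a), Finset.card_univ, Fintype.card_fin]
  rw [← hcard, ← Finset.card_powersetCard]
  apply Finset.card_bij (fun B _ => B.erase a)
  · intro B hB
    simp only [Finset.mem_filter, Finset.mem_powersetCard] at hB ⊢
    refine ⟨Finset.erase_subset_erase a hB.1.1, ?_⟩
    rw [Finset.card_erase_of_mem hB.2, hB.1.2]
    simp
  · intro B hB B' hB' h
    simp only [Finset.mem_filter] at hB hB'
    rw [← Finset.insert_erase hB.2, ← Finset.insert_erase hB'.2, h]
  · intro t ht
    simp only [Finset.mem_powersetCard] at ht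
    have hat : a ∉ t := fun h => (Finset.mem_erase.1 (ht.1 h)).1 rfl
    refine ⟨insert a t, ?_, by rw [Finset.erase_insert hat]⟩
    simp only [Finset.mem_filter, Finset.mem_powersetCard]
    exact ⟨⟨Finset.subset_univ _, by rw [Finset.card_insert_of_notMem hat, ht.2]⟩,
      Finset.mem_insert_self a t⟩



set_option maxHeartbeats 1000000 in
/-- KL divergence bound between two uniform mixtures of shifted `L`-log-Lipschitz
noise distributions indexed by mini-batches, which differ only on the batches
containing the last data point, by at most `β ≤ 1/L`, with mean diameter at most `1`:
`D_KL(P, P') ≤ 2 (ln 2) L² e^L b²β²/n²`. -/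
theorem klDiv_logLipschitz_minibatch_mixtures
    (n b d : ℕ) (hn : 0 < n) (hd : 0 < d) (hb : 0 < b) (hbn : (b : ℝ) ≤ n / 2)
    (L : ℝ) (hL : 0 < L)
    (p : EuclideanSpace ℝ (Fin d) → ℝ)
    (hp_pos : ∀ w, 0 < p w)
    (hp_diff : Differentiable ℝ p)
    (hp_prob : IsProbabilityMeasure
      (MeasureTheory.volume.withDensity fun w => ENNReal.ofReal (p w)))
    (hp_lip : ∀ w, ‖gradient (fun v => Real.log (p v)) w‖ ≤ L)
    (β : ℝ) (hβ0 : 0 ≤ β) (hβL : β ≤ 1 / L)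
    (μ μ' : Finset (Fin n) → EuclideanSpace ℝ (Fin d))
    (hclose : ∀ B ∈ batches n b, (⟨n - 1, Nat.sub_lt hn one_pos⟩ : Fin n) ∈ B →
      ‖μ B - μ' B‖ ≤ β)
    (heq : ∀ B ∈ batches n b, (⟨n - 1, Nat.sub_lt hn one_pos⟩ : Fin n) ∉ B →
      μ B = μ' B)
    (hdiam : ∀ B ∈ batches n b, ∀ B' ∈ batches n b,
      ‖μ B - μ B'‖ ≤ 1 ∧ ‖μ B - μ' B'‖ ≤ 1 ∧ ‖μ' B - μ' B'‖ ≤ 1) :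
    klDiv
      (((batches n b).card : ℝ≥0∞)⁻¹ • ∑ B ∈ batches n b, shiftedNoise p (μ B))
      (((batches n b).card : ℝ≥0∞)⁻¹ • ∑ B ∈ batches n b, shiftedNoise p (μ' B)) ≤
      ENNReal.ofReal (2 * Real.log 2 * L ^ 2 * Real.exp L * b ^ 2 * β ^ 2 / n ^ 2) := by
  classical
  set e : Fin n := ⟨n - 1, Nat.sub_lt hn one_pos⟩ with he_def
  have hcont : Continuous p := hp_diff.continuous
  have hb1 : (1:ℝ) ≤ b := by exact_mod_cast hb
  have hnR : (0:ℝ) < n := by exact_mod_cast hn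
  have hbnlt : b < n := by
    have : (b:ℝ) < n := by linarith
    exact_mod_cast this
  -- cardinalities
  set 𝒢 : Finset (Finset (Fin n)) := batches n b with h𝒢
  set 𝒢₁ : Finset (Finset (Fin n)) := 𝒢.filter (fun B => e ∈ B) with h𝒢₁
  set 𝒢₀ : Finset (Finset (Fin n)) := 𝒢.filter (fun B => ¬ e ∈ B) with h𝒢₀
  have hc_eq : 𝒢.card = n.choose b := by
    rw [h𝒢, batches, Finset.card_powersetCard, Finset.card_univ, Fintype.card_fin]
  have hc_pos : 0 < 𝒢.card := by rw [hc_eq]; exact Nat.choose_pos hbnlt.le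
  have hm1_eq : 𝒢₁.card = (n-1).choose (b-1) := by
    have hb' : b - 1 + 1 = b := Nat.succ_pred_eq_of_pos hb
    rw [h𝒢₁, h𝒢, batches, ← hb']
    exact aux_card_filter_mem e (b-1)
  have hsplit : 𝒢₁.card + 𝒢₀.card = 𝒢.card := by
    rw [h𝒢₁, h𝒢₀]
    exact Finset.card_filter_add_card_filter_not _
  have hkey : 𝒢₁.card * n = b * 𝒢.card := by
    rw [hm1_eq, hc_eq]
    have h := Nat.add_one_mul_choose_eq (n-1) (b-1)
    rw [Nat.sub_add_cancel hn, Nat.sub_add_cancel hb] at h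
    rw [mul_comm, mul_comm b]
    exact h
  set cR : ℝ := (𝒢.card : ℝ) with hcR
  set m1R : ℝ := (𝒢₁.card : ℝ) with hm1R
  set m0R : ℝ := (𝒢₀.card : ℝ) with hm0R
  have hcR_pos : 0 < cR := by rw [hcR]; exact_mod_cast hc_pos
  have hm1R_nonneg : 0 ≤ m1R := Nat.cast_nonneg _
  have hm0R_nonneg : 0 ≤ m0R := Nat.cast_nonneg _
  have hsplitR : m1R + m0R = cR := by rw [hcR, hm1R, hm0R]; exact_mod_cast hsplit
  have hratio : m1R / cR = b / n := by
    rw [div_eq_div_iff hcR_pos.ne' hnR.ne']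
    rw [hm1R, hcR]
    exact_mod_cast hkey
  -- density sums
  set f : EuclideanSpace ℝ (Fin d) → ℝ := fun w => ∑ B ∈ 𝒢, p (w - μ B) with hf_def
  set g : EuclideanSpace ℝ (Fin d) → ℝ := fun w => ∑ B ∈ 𝒢, p (w - μ' B) with hg_def
  set a : EuclideanSpace ℝ (Fin d) → ℝ := fun w => ∑ B ∈ 𝒢₀, p (w - μ' B) with ha_def
  set u : EuclideanSpace ℝ (Fin d) → ℝ := fun w => ∑ B ∈ 𝒢₁, p (w - μ B) with hu_def
  set v : EuclideanSpace ℝ (Fin d) → ℝ := fun w => ∑ B ∈ 𝒢₁, p (w - μ' B) with hv_def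
  have hfs : ∀ w, f w = a w + u w := by
    intro w
    rw [hf_def, ha_def, hu_def]
    simp only
    rw [← Finset.sum_filter_add_sum_filter_not 𝒢 (fun B => e ∈ B)]
    rw [add_comm]
    congr 1
    apply Finset.sum_congr rfl
    intro B hB
    rw [Finset.mem_filter] at hB
    rw [heq B hB.1 hB.2]
  have hgs : ∀ w, g w = a w + v w := by
    intro w
    rw [hg_def, ha_def, hv_def]
    simp only
    rw [← Finset.sum_filter_add_sum_filter_not 𝒢 (fun B => e ∈ B)]
    rw [add_comm]
  -- nonemptiness of 𝒢₀
  have h𝒢₀_ne : 𝒢₀.Nonempty := by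
    have hcard : b ≤ ((Finset.univ : Finset (Fin n)).erase e).card := by
      rw [Finset.card_erase_of_mem (Finset.mem_univ e), Finset.card_univ, Fintype.card_fin]
      omega
    obtain ⟨t, hts, htc⟩ := Finset.exists_subset_card_eq hcard
    refine ⟨t, ?_⟩
    rw [h𝒢₀, Finset.mem_filter, h𝒢, batches, Finset.mem_powersetCard]
    refine ⟨⟨Finset.subset_univ _, htc⟩, fun het => ?_⟩
    exact (Finset.mem_erase.1 (hts het)).1 rfl
  have ha_pos : ∀ w, 0 < a w :=
    fun w => Finset.sum_pos (fun B _ => hp_pos _) h𝒢₀_ne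
  have hu_nonneg : ∀ w, 0 ≤ u w :=
    fun w => Finset.sum_nonneg (fun B _ => (hp_pos _).le)
  have hv_nonneg : ∀ w, 0 ≤ v w :=
    fun w => Finset.sum_nonneg (fun B _ => (hp_pos _).le)
  have hf_pos : ∀ w, 0 < f w := fun w => by
    rw [hfs w]; linarith [ha_pos w, hu_nonneg w]
  have hg_pos : ∀ w, 0 < g w := fun w => by
    rw [hgs w]; linarith [ha_pos w, hv_nonneg w]
  -- log-Lipschitz property
  have hlip : ∀ z z' : EuclideanSpace ℝ (Fin d), p z ≤ exp (L * ‖z - z'‖) * p z' := by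
    have hdiff : ∀ x : EuclideanSpace ℝ (Fin d),
        DifferentiableAt ℝ (fun v => Real.log (p v)) x :=
      fun x => (hp_diff x).log (hp_pos x).ne'
    have hfd : ∀ x : EuclideanSpace ℝ (Fin d),
        ‖fderiv ℝ (fun v => Real.log (p v)) x‖ ≤ L := by
      intro x
      have h := hp_lip x
      rwa [gradient, LinearIsometryEquiv.norm_map] at h
    intro z z'
    have hL' := Convex.norm_image_sub_le_of_norm_fderiv_le
      (fun x (_ : x ∈ Set.univ) => hdiff x) (fun x _ => hfd x) convex_univ
      (Set.mem_univ z') (Set.mem_univ z)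
    have h1 : Real.log (p z) - Real.log (p z') ≤ L * ‖z - z'‖ :=
      le_trans (le_abs_self _) (by simpa [Real.norm_eq_abs] using hL')
    calc p z = exp (Real.log (p z)) := (Real.exp_log (hp_pos z)).symm
      _ ≤ exp (L * ‖z - z'‖ + Real.log (p z')) := by
          apply Real.exp_le_exp.2; linarith
      _ = exp (L * ‖z - z'‖) * p z' := by rw [Real.exp_add, Real.exp_log (hp_pos z')]
  -- per-term β-closeness bounds
  have hterm : ∀ B ∈ 𝒢₁, ∀ w : EuclideanSpace ℝ (Fin d),
      p (w - μ B) ≤ exp (L * β) * p (w - μ' B) ∧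
      p (w - μ' B) ≤ exp (L * β) * p (w - μ B) := by
    intro B hB w
    rw [h𝒢₁, Finset.mem_filter] at hB
    have hβB : ‖μ B - μ' B‖ ≤ β := hclose B hB.1 hB.2
    constructor
    · refine le_trans (hlip (w - μ B) (w - μ' B)) ?_
      apply mul_le_mul_of_nonneg_right _ (hp_pos _).le
      apply Real.exp_le_exp.2
      have : ‖w - μ B - (w - μ' B)‖ = ‖μ B - μ' B‖ := by
        rw [show w - μ B - (w - μ' B) = μ' B - μ B by abel, norm_sub_rev]
      rw [this]
      exact mul_le_mul_of_nonneg_left hβB hL.le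
    · refine le_trans (hlip (w - μ' B) (w - μ B)) ?_
      apply mul_le_mul_of_nonneg_right _ (hp_pos _).le
      apply Real.exp_le_exp.2
      have : ‖w - μ' B - (w - μ B)‖ = ‖μ B - μ' B‖ := by
        rw [show w - μ' B - (w - μ B) = μ B - μ' B by abel]
      rw [this]
      exact mul_le_mul_of_nonneg_left hβB hL.le
  have hx1 : ∀ w, u w ≤ exp (L * β) * v w := by
    intro w
    rw [hu_def, hv_def]
    simp only
    rw [Finset.mul_sum]
    exact Finset.sum_le_sum (fun B hB => (hterm B hB w).1)
  have hx2 : ∀ w, v w ≤ exp (L * β) * u w := by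
    intro w
    rw [hu_def, hv_def]
    simp only
    rw [Finset.mul_sum]
    exact Finset.sum_le_sum (fun B hB => (hterm B hB w).2)
  -- pairing bound
  have hpair : ∀ w, v w * m0R ≤ exp L * m1R * a w := by
    intro w
    have hBB' : ∀ B ∈ 𝒢₁, ∀ B' ∈ 𝒢₀, p (w - μ' B) ≤ exp L * p (w - μ' B') := by
      intro B hB B' hB'
      rw [h𝒢₁, Finset.mem_filter] at hB
      rw [h𝒢₀, Finset.mem_filter] at hB'
      have hd1 : ‖μ' B - μ' B'‖ ≤ 1 := (hdiam B hB.1 B' hB'.1).2.2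
      refine le_trans (hlip (w - μ' B) (w - μ' B')) ?_
      apply mul_le_mul_of_nonneg_right _ (hp_pos _).le
      apply Real.exp_le_exp.2
      have : ‖w - μ' B - (w - μ' B')‖ = ‖μ' B - μ' B'‖ := by
        rw [show w - μ' B - (w - μ' B') = μ' B' - μ' B by abel, norm_sub_rev]
      rw [this]
      calc L * ‖μ' B - μ' B'‖ ≤ L * 1 := mul_le_mul_of_nonneg_left hd1 hL.le
        _ = L := mul_one L
    have step : ∀ B ∈ 𝒢₁, p (w - μ' B) * m0R ≤ exp L * a w := by
      intro B hB
      have : p (w - μ' B) * m0R = ∑ B' ∈ 𝒢₀, p (w - μ' B) := by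
        rw [Finset.sum_const, hm0R, nsmul_eq_mul, mul_comm]
      rw [this, ha_def]
      simp only
      rw [Finset.mul_sum]
      exact Finset.sum_le_sum (fun B' hB' => hBB' B hB B' hB')
    calc v w * m0R = ∑ B ∈ 𝒢₁, p (w - μ' B) * m0R := by
          rw [hv_def]; simp only; rw [Finset.sum_mul]
      _ ≤ ∑ B ∈ 𝒢₁, exp L * a w := Finset.sum_le_sum step
      _ = m1R * (exp L * a w) := by rw [Finset.sum_const, hm1R, nsmul_eq_mul]
      _ = exp L * m1R * a w := by ring
  have hexpL1 : (1:ℝ) ≤ exp L := by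
    rw [← Real.exp_zero]; exact Real.exp_le_exp.2 hL.le
  have hvc : ∀ w, v w * cR ≤ (exp L * m1R) * (a w + v w) := by
    intro w
    have h1 := hpair w
    have h2 : v w * m1R ≤ exp L * m1R * v w := by
      rw [mul_comm (v w) m1R]
      calc m1R * v w = 1 * (m1R * v w) := (one_mul _).symm
        _ ≤ exp L * (m1R * v w) := by
            apply mul_le_mul_of_nonneg_right hexpL1 (mul_nonneg hm1R_nonneg (hv_nonneg w))
        _ = exp L * m1R * v w := by ring
    calc v w * cR = v w * m0R + v w * m1R := by rw [← hsplitR]; ring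
      _ ≤ exp L * m1R * a w + exp L * m1R * v w := add_le_add h1 h2
      _ = (exp L * m1R) * (a w + v w) := by ring
  -- pointwise key bound
  set C0 : ℝ := (exp (L*β) + exp (-(L*β)) - 2) * ((exp L * m1R) / cR) with hC0
  have hpt : ∀ w, f w * Real.log (f w / g w) + (g w - f w) ≤ C0 * u w := by
    intro w
    have := aux_core (ha_pos w) (hu_nonneg w) (hv_nonneg w)
      (mul_nonneg (Real.exp_pos L).le hm1R_nonneg) hcR_pos (hx1 w) (hx2 w) (hvc w)
    rw [hfs w, hgs w]
    calc (a w + u w) * Real.log ((a w + u w) / (a w + v w)) + (a w + v w - (a w + u w))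
        ≤ (exp (L*β) + exp (-(L*β)) - 2) * ((exp L * m1R) / cR) * u w := this
      _ = C0 * u w := by rw [hC0]
  -- continuity / measurability
  have hf_cont : Continuous f := by
    rw [hf_def]
    exact continuous_finset_sum _ (fun B _ => hcont.comp (continuous_id.sub continuous_const))
  have hg_cont : Continuous g := by
    rw [hg_def]
    exact continuous_finset_sum _ (fun B _ => hcont.comp (continuous_id.sub continuous_const))
  have hfg_cont : Continuous (fun w => f w / g w) :=
    hf_cont.div hg_cont (fun w => (hg_pos w).ne')
  have hlog_cont : Continuous (fun w => Real.log (f w / g w)) :=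
    hfg_cont.log (fun w => (div_pos (hf_pos w) (hg_pos w)).ne')
  set P : Measure (EuclideanSpace ℝ (Fin d)) :=
    ((𝒢.card : ℝ≥0∞))⁻¹ • ∑ B ∈ 𝒢, shiftedNoise p (μ B) with hP_def
  set P' : Measure (EuclideanSpace ℝ (Fin d)) :=
    ((𝒢.card : ℝ≥0∞))⁻¹ • ∑ B ∈ 𝒢, shiftedNoise p (μ' B) with hP'_def
  have hmeas_term : ∀ (ν : Finset (Fin n) → EuclideanSpace ℝ (Fin d)) (B : Finset (Fin n)),
      Measurable (fun w => ENNReal.ofReal (p (w - ν B))) := fun ν B =>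
    ENNReal.measurable_ofReal.comp ((hcont.comp (continuous_id.sub continuous_const)).measurable)
  have hsum_eq : ∀ (ν : Finset (Fin n) → EuclideanSpace ℝ (Fin d)),
      (∑ B ∈ 𝒢, shiftedNoise p (ν B)) =
      volume.withDensity (fun w => ENNReal.ofReal (∑ B ∈ 𝒢, p (w - ν B))) := by
    intro ν
    rw [show (fun w => ENNReal.ofReal (∑ B ∈ 𝒢, p (w - ν B))) =
        fun w => ∑ B ∈ 𝒢, ENNReal.ofReal (p (w - ν B)) from
      funext fun w => ENNReal.ofReal_sum_of_nonneg (fun B _ => (hp_pos _).le)]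
    rw [aux_withDensity_finsetSum volume 𝒢 _ (hmeas_term ν)]
    rfl
  have hcE_ne0 : ((𝒢.card : ℝ≥0∞)) ≠ 0 := by
    exact_mod_cast hc_pos.ne'
  have hcE_netop : ((𝒢.card : ℝ≥0∞)) ≠ ⊤ := ENNReal.natCast_ne_top _
  have hcinv_netop : ((𝒢.card : ℝ≥0∞))⁻¹ ≠ ⊤ := ENNReal.inv_ne_top.2 hcE_ne0
  have hP_wd : P = volume.withDensity
      (fun w => ((𝒢.card : ℝ≥0∞))⁻¹ * ENNReal.ofReal (f w)) := by
    rw [hP_def, hsum_eq μ, ← withDensity_smul' _ _ hcinv_netop]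
    rfl
  have hP'_wd : P' = volume.withDensity
      (fun w => ((𝒢.card : ℝ≥0∞))⁻¹ * ENNReal.ofReal (g w)) := by
    rw [hP'_def, hsum_eq μ', ← withDensity_smul' _ _ hcinv_netop]
    rfl
  -- masses
  have hmass_lint : ∫⁻ w, ENNReal.ofReal (p w) ∂volume = 1 := by
    have h := hp_prob.measure_univ
    rwa [withDensity_apply _ MeasurableSet.univ, Measure.restrict_univ] at h
  have hmass : ∀ m : EuclideanSpace ℝ (Fin d),
      ∫⁻ w, ENNReal.ofReal (p (w - m)) ∂volume = 1 := by
    intro m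
    rw [show (fun w => ENNReal.ofReal (p (w - m))) =
        fun w => (fun x => ENNReal.ofReal (p x)) (w + (-m)) from
      funext fun w => by rw [sub_eq_add_neg]]
    rw [lintegral_add_right_eq_self (fun x => ENNReal.ofReal (p x)) (-m)]
    exact hmass_lint
  have hshift_univ : ∀ m, shiftedNoise p m Set.univ = 1 := by
    intro m
    rw [shiftedNoise, withDensity_apply _ MeasurableSet.univ, Measure.restrict_univ]
    exact hmass m
  have hsum_univ : ∀ (ν : Finset (Fin n) → EuclideanSpace ℝ (Fin d)),
      (((𝒢.card : ℝ≥0∞))⁻¹ • ∑ B ∈ 𝒢, shiftedNoise p (ν B)) Set.univ = 1 := by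
    intro ν
    rw [Measure.smul_apply, Measure.finset_sum_apply]
    rw [Finset.sum_congr rfl (fun B _ => hshift_univ (ν B))]
    rw [Finset.sum_const, nsmul_eq_mul, mul_one, smul_eq_mul]
    exact ENNReal.inv_mul_cancel hcE_ne0 hcE_netop
  have hP_prob : IsProbabilityMeasure P := ⟨hsum_univ μ⟩
  have hP'_prob : IsProbabilityMeasure P' := ⟨hsum_univ μ'⟩
  haveI := hP_prob
  haveI := hP'_prob
  -- absolute continuity
  have hG_meas : Measurable (fun w => ((𝒢.card : ℝ≥0∞))⁻¹ * ENNReal.ofReal (g w)) :=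
    measurable_const.mul (ENNReal.measurable_ofReal.comp hg_cont.measurable)
  have hF_meas : Measurable (fun w => ((𝒢.card : ℝ≥0∞))⁻¹ * ENNReal.ofReal (f w)) :=
    measurable_const.mul (ENNReal.measurable_ofReal.comp hf_cont.measurable)
  have hvol_acP' : volume ≪ P' := by
    rw [hP'_wd]
    apply withDensity_absolutelyContinuous' hG_meas.aemeasurable
    filter_upwards with w
    apply mul_ne_zero (ENNReal.inv_ne_zero.2 hcE_netop)
    simp [ENNReal.ofReal_eq_zero, not_le, hg_pos w]
  have hac : P ≪ P' := by
    refine Measure.AbsolutelyContinuous.trans ?_ hvol_acP'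
    rw [hP_wd]
    exact withDensity_absolutelyContinuous _ _
  -- Radon-Nikodym derivative
  set H : EuclideanSpace ℝ (Fin d) → ℝ≥0∞ := fun w => ENNReal.ofReal (f w / g w) with hH_def
  have hH_meas : Measurable H := ENNReal.measurable_ofReal.comp hfg_cont.measurable
  have hPH : P = P'.withDensity H := by
    rw [hP'_wd, ← withDensity_mul volume hG_meas hH_meas, hP_wd]
    congr 1
    funext w
    simp only [Pi.mul_apply, hH_def]
    rw [mul_assoc, ← ENNReal.ofReal_mul (hg_pos w).le,
      show g w * (f w / g w) = f w from by
        rw [mul_comm]; exact div_mul_cancel₀ _ (hg_pos w).ne']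
  have hrn : P.rnDeriv P' =ᵐ[P'] H := by
    rw [hPH]
    exact Measure.rnDeriv_withDensity P' hH_meas
  have hllr' : llr P P' =ᵐ[P'] fun w => Real.log (f w / g w) := by
    filter_upwards [hrn] with w hw
    simp only [llr_def]
    rw [hw]
    simp only [hH_def]
    rw [ENNReal.toReal_ofReal (div_nonneg (hf_pos w).le (hg_pos w).le)]
  have hllr : llr P P' =ᵐ[P] fun w => Real.log (f w / g w) := hac.ae_eq hllr'
  -- rewrite klDiv
  rw [klDiv, if_pos hac]
  apply ENNReal.ofReal_le_ofReal
  rw [integral_congr_ae hllr]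
  -- transfer integrals to volume
  have hcnn_ne0 : ((𝒢.card : ℝ≥0)) ≠ 0 := Nat.cast_ne_zero.2 hc_pos.ne'
  have hPQ : ∀ (h : EuclideanSpace ℝ (Fin d) → ℝ) (hconth : Continuous h)
      (hpos : ∀ w, 0 < h w),
      volume.withDensity (fun w => ((𝒢.card : ℝ≥0∞))⁻¹ * ENNReal.ofReal (h w)) =
      volume.withDensity (fun w =>
        ((((𝒢.card : ℝ≥0))⁻¹ * (h w).toNNReal : ℝ≥0) : ℝ≥0∞)) := by
    intro h hch hph
    congr 1
    funext w
    rw [ENNReal.coe_mul, ENNReal.coe_inv hcnn_ne0, ENNReal.coe_natCast]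
    rfl
  have htransfer : ∀ (h : EuclideanSpace ℝ (Fin d) → ℝ) (hch : Continuous h)
      (hph : ∀ w, 0 < h w) (φ : EuclideanSpace ℝ (Fin d) → ℝ),
      ∫ w, φ w ∂(volume.withDensity
        (fun w => ((𝒢.card : ℝ≥0∞))⁻¹ * ENNReal.ofReal (h w))) =
      ∫ w, (cR⁻¹ * h w) * φ w ∂volume := by
    intro h hch hph φ
    have hFn : Measurable (fun w => ((𝒢.card : ℝ≥0))⁻¹ * (h w).toNNReal) :=
      (continuous_const.mul (continuous_real_toNNReal.comp hch)).measurable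
    rw [hPQ h hch hph]
    rw [integral_withDensity_eq_integral_smul hFn φ]
    congr 1
    funext w
    rw [NNReal.smul_def, NNReal.coe_mul, NNReal.coe_inv, Real.coe_toNNReal _ (hph w).le]
    rw [NNReal.coe_natCast, hcR, smul_eq_mul]
  -- integrability facts
  have hint_p : ∀ m, Integrable (fun w => p (w - m)) volume := by
    intro m
    constructor
    · exact (hcont.comp (continuous_id.sub continuous_const)).aestronglyMeasurable
    · rw [hasFiniteIntegral_iff_ofReal (Filter.Eventually.of_forall fun w => (hp_pos _).le)]
      rw [hmass m]
      exact ENNReal.one_lt_top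
  have hip1 : ∀ m, ∫ w, p (w - m) ∂volume = 1 := by
    intro m
    have h1 := integral_eq_lintegral_of_nonneg_ae (μ := volume) (f := fun w => p (w - m))
      (Filter.Eventually.of_forall fun w => (hp_pos _).le)
      (hcont.comp (continuous_id.sub continuous_const)).aestronglyMeasurable
    rw [hmass m] at h1
    simpa using h1
  have hint_f : Integrable f volume := by
    rw [hf_def]
    exact integrable_finset_sum _ (fun B _ => hint_p (μ B))
  have hint_g : Integrable g volume := by
    rw [hg_def]
    exact integrable_finset_sum _ (fun B _ => hint_p (μ' B))
  have hint_u : Integrable u volume := by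
    rw [hu_def]
    exact integrable_finset_sum _ (fun B _ => hint_p (μ B))
  have hint_cf : Integrable (fun w => cR⁻¹ * f w) volume := hint_f.const_mul _
  have hint_cg : Integrable (fun w => cR⁻¹ * g w) volume := hint_g.const_mul _
  -- bound on the log-ratio
  have hexpβ1 : (1:ℝ) ≤ exp (L * β) := by
    rw [← Real.exp_zero]
    exact Real.exp_le_exp.2 (by positivity)
  have hfg_ub : ∀ w, f w ≤ exp (L * β) * g w := by
    intro w
    rw [hfs w, hgs w]
    nlinarith [hx1 w, ha_pos w, hv_nonneg w]
  have hgf_ub : ∀ w, g w ≤ exp (L * β) * f w := by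
    intro w
    rw [hfs w, hgs w]
    nlinarith [hx2 w, ha_pos w, hu_nonneg w]
  have hbnd_log : ∀ w, |Real.log (f w / g w)| ≤ L * β := by
    intro w
    rw [abs_le]
    have hfgpos : 0 < f w / g w := div_pos (hf_pos w) (hg_pos w)
    have hgfpos : 0 < g w / f w := div_pos (hg_pos w) (hf_pos w)
    have h2 : Real.log (g w / f w) = - Real.log (f w / g w) := by
      rw [← Real.log_inv, inv_div]
    constructor
    · have h1 : Real.log (g w / f w) ≤ L * β := by
        rw [← Real.log_exp (L * β)]
        apply Real.log_le_log hgfpos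
        rw [div_le_iff₀ (hf_pos w)]
        exact hgf_ub w
      linarith
    · rw [← Real.log_exp (L * β)]
      apply Real.log_le_log hfgpos
      rw [div_le_iff₀ (hg_pos w)]
      exact hfg_ub w
    -- rewrite the P-integral as a volume integral
  rw [hP_wd, htransfer f hf_cont hf_pos]
  -- masses
  have hIf : ∫ w, cR⁻¹ * f w ∂volume = 1 := by
    have h1 : ∫ (_ : EuclideanSpace ℝ (Fin d)), (1:ℝ) ∂P = 1 := by
      rw [integral_const]; simp
    rw [hP_wd, htransfer f hf_cont hf_pos] at h1
    simpa using h1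
  have hIg : ∫ w, cR⁻¹ * g w ∂volume = 1 := by
    have h1 : ∫ (_ : EuclideanSpace ℝ (Fin d)), (1:ℝ) ∂P' = 1 := by
      rw [integral_const]; simp
    rw [hP'_wd, htransfer g hg_cont hg_pos] at h1
    simpa using h1
  have hIu : ∫ w, u w ∂volume = m1R := by
    rw [hu_def]
    rw [integral_finset_sum _ (fun B _ => hint_p (μ B))]
    rw [Finset.sum_congr rfl (fun B _ => hip1 (μ B)), Finset.sum_const, hm1R]
    simp
  -- integrability of the main integrand
  have hcf_nonneg : ∀ w, 0 ≤ cR⁻¹ * f w :=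
    fun w => mul_nonneg (inv_nonneg.2 hcR_pos.le) (hf_pos w).le
  have hasm : AEStronglyMeasurable
      (fun w => (cR⁻¹ * f w) * Real.log (f w / g w)) volume :=
    ((continuous_const.mul hf_cont).mul hlog_cont).aestronglyMeasurable
  have hint_main : Integrable (fun w => (cR⁻¹ * f w) * Real.log (f w / g w)) volume := by
    apply Integrable.mono' (hint_cf.const_mul (L * β)) hasm
    filter_upwards with w
    rw [norm_mul, Real.norm_eq_abs, Real.norm_eq_abs, abs_of_nonneg (hcf_nonneg w)]
    calc (cR⁻¹ * f w) * |Real.log (f w / g w)|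
        ≤ (cR⁻¹ * f w) * (L * β) := mul_le_mul_of_nonneg_left (hbnd_log w) (hcf_nonneg w)
      _ = L * β * (cR⁻¹ * f w) := by ring
  have hint_cu : Integrable (fun w => C0 * (cR⁻¹ * u w)) volume :=
    (hint_u.const_mul _).const_mul _
  -- final numeric facts
  have hx0 : 0 ≤ L * β := by positivity
  have hxle : L * β ≤ 1 := by
    calc L * β ≤ L * (1 / L) := mul_le_mul_of_nonneg_left hβL hL.le
      _ = 1 := by field_simp
  have hq := aux_exp_quad hx0 hxle
  have hint_sub : Integrable (fun w => cR⁻¹ * g w - cR⁻¹ * f w) volume :=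
    hint_cg.sub hint_cf
  -- main chain
  calc ∫ w, (cR⁻¹ * f w) * Real.log (f w / g w) ∂volume
      = ∫ w, ((cR⁻¹ * f w) * Real.log (f w / g w) + (cR⁻¹ * g w - cR⁻¹ * f w)) ∂volume := by
        rw [integral_add hint_main hint_sub, integral_sub hint_cg hint_cf,
          hIf, hIg]
        ring
    _ ≤ ∫ w, C0 * (cR⁻¹ * u w) ∂volume := by
        apply integral_mono (hint_main.add hint_sub) hint_cu
        intro w
        calc (cR⁻¹ * f w) * Real.log (f w / g w) + (cR⁻¹ * g w - cR⁻¹ * f w)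
            = cR⁻¹ * (f w * Real.log (f w / g w) + (g w - f w)) := by ring
          _ ≤ cR⁻¹ * (C0 * u w) :=
              mul_le_mul_of_nonneg_left (hpt w) (inv_nonneg.2 hcR_pos.le)
          _ = C0 * (cR⁻¹ * u w) := by ring
    _ = C0 * (cR⁻¹ * m1R) := by
        rw [integral_const_mul, integral_const_mul, hIu]
    _ = (exp (L * β) + exp (-(L * β)) - 2) * (exp L * (m1R / cR) * (m1R / cR)) := by
        rw [hC0]; ring
    _ = (exp (L * β) + exp (-(L * β)) - 2) * (exp L * ((b:ℝ)/n) * ((b:ℝ)/n)) := by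
        rw [hratio]
    _ ≤ (2 * Real.log 2 * (L * β) ^ 2) * (exp L * ((b:ℝ)/n) * ((b:ℝ)/n)) := by
        apply mul_le_mul_of_nonneg_right hq
        positivity
    _ = 2 * Real.log 2 * L ^ 2 * Real.exp L * (b:ℝ) ^ 2 * β ^ 2 / (n:ℝ) ^ 2 := by
        ring
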